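/- Noiseless case: let B ∈ ℝ^{n×m}, and let U₋ ∈ ℝ^{m×T}, X ∈ ℝ^{n×(T+1)} be data with X₋, X₊ the first and last T columns of X; assume the set 𝒜⁰ := { A ∈ ℝ^{n×n} : X₊ = A X₋ + B U₋ } is nonempty. Then rank [A − λI, B] = n for every A ∈ 𝒜⁰ and every λ ∈ ℂ if and only if rank [X₊ − λX₋, B] = n for all λ ∈ ℂ. Similarly, rank [A − λI, B] = n for every A ∈ 𝒜⁰ and every λ ∈ ℂ with |λ| ≥ 1 if and only if rank [X₊ − λX₋, B] = n for all λ ∈ ℂ with |λ| ≥ 1. -/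

import Mathlib

open Matrix

/-- Complexification of a real matrix. -/
noncomputable def cx {a b : ℕ} (M : Matrix (Fin a) (Fin b) ℝ) : Matrix (Fin a) (Fin b) ℂ :=
  M.map (algebraMap ℝ ℂ)

/-- First T columns of the state data matrix X. -/
def Xminus {n T : ℕ} (X : Matrix (Fin n) (Fin (T + 1)) ℝ) : Matrix (Fin n) (Fin T) ℝ :=
  Matrix.of fun i t => X i t.castSucc

/-- Last T columns of the state data matrix X. -/
def Xplus {n T : ℕ} (X : Matrix (Fin n) (Fin (T + 1)) ℝ) : Matrix (Fin n) (Fin T) ℝ :=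
  Matrix.of fun i t => X i t.succ

noncomputable def cxv {a : ℕ} (v : Fin a → ℝ) : Fin a → ℂ := fun i => (v i : ℂ)

lemma cxv_eq_zero {a : ℕ} {v : Fin a → ℝ} : cxv v = 0 ↔ v = 0 := by
  constructor
  · intro h; funext i
    have := congrFun h i
    simpa [cxv] using this
  · intro h; funext i; simp [cxv, h]

lemma cx_mul {a b c : ℕ} (M : Matrix (Fin a) (Fin b) ℝ) (N : Matrix (Fin b) (Fin c) ℝ) :
    cx (M * N) = cx M * cx N := Matrix.map_mul

lemma cx_add {a b : ℕ} (M N : Matrix (Fin a) (Fin b) ℝ) : cx (M + N) = cx M + cx N := by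
  unfold cx; exact Matrix.map_add _ (map_add _) M N

lemma cx_neg {a b : ℕ} (M : Matrix (Fin a) (Fin b) ℝ) : cx (-M) = -cx M := by
  ext i j; simp [cx]

lemma cxv_vecMul {a b : ℕ} (w : Fin a → ℝ) (M : Matrix (Fin a) (Fin b) ℝ) :
    cxv (w ᵥ* M) = (cxv w) ᵥ* (cx M) := by
  funext j; simp [cxv, cx, vecMul, dotProduct]

lemma vecMul_smul_mat {a b : ℕ} (lam : ℂ) (v : Fin a → ℂ) (M : Matrix (Fin a) (Fin b) ℂ) :
    v ᵥ* (lam • M) = lam • (v ᵥ* M) := by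
  funext j; simp [vecMul, dotProduct, Finset.mul_sum, mul_left_comm]

lemma rank_eq_iff_forall_vecMul {n : ℕ} {k : Type*} [Fintype k] (M : Matrix (Fin n) k ℂ) :
    M.rank = n ↔ ∀ ξ : Fin n → ℂ, ξ ᵥ* M = 0 → ξ = 0 := by
  have hsum : ∀ ξ : Fin n → ℂ, ∑ i, ξ i • M i = ξ ᵥ* M := by
    intro ξ; funext j
    simp [vecMul, dotProduct, Finset.sum_apply]
  rw [M.rank_eq_finrank_span_row]
  unfold Matrix.row
  constructor
  · intro h ξ hξ
    have hli : LinearIndependent ℂ M := linearIndependent_iff_card_eq_finrank_span.mpr (by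
      rw [Set.finrank]; simp [h])
    have := Fintype.linearIndependent_iff.mp hli ξ (by rw [hsum]; exact hξ)
    funext i; exact this i
  · intro h
    have hli : LinearIndependent ℂ M := Fintype.linearIndependent_iff.mpr (fun g hg => by
      have := h g (by rw [← hsum]; exact hg)
      exact fun i => congrFun this i)
    have := linearIndependent_iff_card_eq_finrank_span.mp hli
    rw [Set.finrank] at this
    simpa using this.symm

lemma vecMul_fromCols_eq_zero {n : ℕ} {k l : Type*} (M₁ : Matrix (Fin n) k ℂ)
    (M₂ : Matrix (Fin n) l ℂ) (ξ : Fin n → ℂ) :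
    ξ ᵥ* fromCols M₁ M₂ = 0 ↔ ξ ᵥ* M₁ = 0 ∧ ξ ᵥ* M₂ = 0 := by
  rw [vecMul_fromCols]
  constructor
  · intro h
    exact ⟨funext fun j => congrFun h (Sum.inl j), funext fun j => congrFun h (Sum.inr j)⟩
  · rintro ⟨h1, h2⟩; funext j; cases j <;> simp_all

lemma vecMulVec_mul' {a b c : ℕ} (f : Fin a → ℝ) (r : Fin b → ℝ) (M : Matrix (Fin b) (Fin c) ℝ) :
    vecMulVec f r * M = vecMulVec f (r ᵥ* M) := by
  ext i j
  simp [mul_apply, vecMulVec_apply, vecMul, dotProduct, Finset.mul_sum, mul_assoc]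

lemma vecMul_cx_vecMulVec {a b : ℕ} (ξ : Fin a → ℂ) (f : Fin a → ℝ) (r : Fin b → ℝ) :
    ξ ᵥ* cx (vecMulVec f r) = (ξ ⬝ᵥ cxv f) • cxv r := by
  funext j
  simp only [vecMul, dotProduct, cx, cxv, map_apply, vecMulVec_apply, Pi.smul_apply,
    smul_eq_mul, Finset.sum_mul, Complex.coe_algebraMap]
  push_cast
  apply Finset.sum_congr rfl
  intro i _; ring

lemma dot_cxv {a : ℕ} (ξ : Fin a → ℂ) (f : Fin a → ℝ) :
    ξ ⬝ᵥ cxv f = ((((fun i => (ξ i).re) ⬝ᵥ f : ℝ) : ℂ)) + (((fun i => (ξ i).im) ⬝ᵥ f : ℝ) : ℂ) * Complex.I := by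
  apply Complex.ext <;>
    simp [dotProduct, cxv, Complex.ext_iff]

lemma vecMul_cx_re_im {a b : ℕ} (v : Fin a → ℂ) (M : Matrix (Fin a) (Fin b) ℝ)
    (h : v ᵥ* cx M = 0) :
    (fun i => (v i).re) ᵥ* M = 0 ∧ (fun i => (v i).im) ᵥ* M = 0 := by
  constructor <;> funext j <;>
  · have h1 := congrArg Complex.re (congrFun h j)
    have h2 := congrArg Complex.im (congrFun h j)
    simp [vecMul, dotProduct, cx, Complex.re_sum, Complex.im_sum] at h1 h2 ⊢
    first | exact h1 | exact h2

lemma vecMulVec_zero_right {a b : ℕ} (f : Fin a → ℝ) :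
    vecMulVec f (0 : Fin b → ℝ) = 0 := by
  ext i j; simp [vecMulVec_apply]

lemma cxv_smul {a : ℕ} (r : ℝ) (w : Fin a → ℝ) : cxv (r • w) = (r : ℂ) • cxv w := by
  funext i; simp [cxv]

lemma cxv_sub {a : ℕ} (w₁ w₂ : Fin a → ℝ) : cxv (w₁ - w₂) = cxv w₁ - cxv w₂ := by
  funext i; simp [cxv]

lemma key_construction {n mm T : ℕ} (A : Matrix (Fin n) (Fin n) ℝ) (B : Matrix (Fin n) (Fin mm) ℝ)
    (U : Matrix (Fin mm) (Fin T) ℝ) (Xm Xp : Matrix (Fin n) (Fin T) ℝ)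
    (hA : Xp = A * Xm + B * U) (lam : ℂ) (ξ : Fin n → ℂ) (hξ0 : ξ ≠ 0)
    (h1 : ξ ᵥ* (cx Xp - lam • cx Xm) = 0) (h2 : ξ ᵥ* cx B = 0) :
    ∃ (A' : Matrix (Fin n) (Fin n) ℝ) (lam' : ℂ) (ζ : Fin n → ℂ),
      Xp = A' * Xm + B * U ∧ ‖lam'‖ = ‖lam‖ ∧ ζ ≠ 0 ∧
      ζ ᵥ* (cx A' - lam' • (1 : Matrix (Fin n) (Fin n) ℂ)) = 0 ∧ ζ ᵥ* cx B = 0 := by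
  have hcxXp : cx Xp = cx A * cx Xm + cx B * cx U := by
    rw [hA, cx_add, cx_mul, cx_mul]
  have h1' : ξ ᵥ* cx Xp = lam • (ξ ᵥ* cx Xm) := by
    rw [vecMul_sub, vecMul_smul_mat, sub_eq_zero] at h1
    exact h1
  have h0BU : ξ ᵥ* (cx B * cx U) = 0 := by
    rw [← vecMul_vecMul, h2, zero_vecMul]
  have hAXm : ξ ᵥ* (cx A * cx Xm) = lam • (ξ ᵥ* cx Xm) := by
    calc ξ ᵥ* (cx A * cx Xm) = ξ ᵥ* (cx A * cx Xm) + ξ ᵥ* (cx B * cx U) := by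
          rw [h0BU, add_zero]
      _ = ξ ᵥ* cx Xp := by rw [hcxXp, vecMul_add]
      _ = lam • (ξ ᵥ* cx Xm) := h1'
  set v : Fin n → ℂ := ξ ᵥ* cx A - lam • ξ with hv_def
  have hv : v ᵥ* cx Xm = 0 := by
    rw [hv_def, sub_vecMul, Matrix.smul_vecMul, vecMul_vecMul, hAXm, sub_self]
  obtain ⟨hrv1, hrv2⟩ := vecMul_cx_re_im v Xm hv
  set p : Fin n → ℝ := fun i => (ξ i).re with hp_def
  set q : Fin n → ℝ := fun i => (ξ i).im with hq_def
  set rv1 : Fin n → ℝ := fun i => (v i).re with hrv1_def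
  set rv2 : Fin n → ℝ := fun i => (v i).im with hrv2_def
  rcases eq_or_ne ((p ⬝ᵥ p) * (q ⬝ᵥ q) - (p ⬝ᵥ q) ^ 2) 0 with hd | hd
  · -- dependent case: ξ = μ • cxv η for real η
    have hstep : ∃ (η : Fin n → ℝ) (μ : ℂ), η ≠ 0 ∧ μ ≠ 0 ∧ ξ = μ • cxv η := by
      by_cases hp : p = 0
      · refine ⟨q, Complex.I, ?_, Complex.I_ne_zero, ?_⟩
        · intro hq
          apply hξ0; funext i
          apply Complex.ext
          · simpa using congrFun hp i
          · simpa using congrFun hq i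
        · funext i
          have hpi : (ξ i).re = 0 := congrFun hp i
          apply Complex.ext <;> simp [cxv, hpi, hq_def]
      · have hpp : p ⬝ᵥ p ≠ 0 := by
          rw [Ne, dotProduct_self_eq_zero]; exact hp
        have hqc : q = ((p ⬝ᵥ q) / (p ⬝ᵥ p)) • p := by
          have hw : (q - ((p ⬝ᵥ q) / (p ⬝ᵥ p)) • p) ⬝ᵥ (q - ((p ⬝ᵥ q) / (p ⬝ᵥ p)) • p) = 0 := by
            simp only [dotProduct_sub, sub_dotProduct, dotProduct_smul, smul_dotProduct,
              smul_eq_mul]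
            rw [dotProduct_comm q p]
            field_simp
            linear_combination hd
          exact sub_eq_zero.mp (dotProduct_self_eq_zero.mp hw)
        refine ⟨p, 1 + ((p ⬝ᵥ q) / (p ⬝ᵥ p)) * Complex.I, hp, ?_, ?_⟩
        · simp [Complex.ext_iff]
        · funext i
          have hqi : (ξ i).im = ((p ⬝ᵥ q) / (p ⬝ᵥ p)) * p i := by
            have := congrFun hqc i
            simpa [hq_def] using this
          apply Complex.ext <;> simp [cxv, hqi, hp_def]
    obtain ⟨η, μ, hη0, hμ0, hξη⟩ := hstep
    have hηB : η ᵥ* B = 0 := by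
      have h2' := h2
      rw [hξη, Matrix.smul_vecMul, ← cxv_vecMul] at h2'
      have := (smul_eq_zero.mp h2').resolve_left hμ0
      exact cxv_eq_zero.mp this
    have hXpXm : cxv (η ᵥ* Xp) = lam • cxv (η ᵥ* Xm) := by
      have h3 := h1'
      rw [hξη, Matrix.smul_vecMul, Matrix.smul_vecMul, ← cxv_vecMul, ← cxv_vecMul,
        smul_comm lam μ] at h3
      have h4 : μ • (cxv (η ᵥ* Xp) - lam • cxv (η ᵥ* Xm)) = 0 := by
        rw [smul_sub, h3, sub_self]
      exact sub_eq_zero.mp ((smul_eq_zero.mp h4).resolve_left hμ0)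
    have hηAXm : η ᵥ* (A * Xm) = η ᵥ* Xp := by
      have h4 : η ᵥ* Xp = η ᵥ* (A * Xm) + (η ᵥ* B) ᵥ* U := by
        rw [hA, vecMul_add, vecMul_vecMul]
      rw [h4, hηB, zero_vecMul, add_zero]
    obtain ⟨μr, habs, hμr⟩ : ∃ μr : ℝ, ‖((μr : ℝ) : ℂ)‖ = ‖lam‖ ∧
        η ᵥ* (A * Xm) = μr • (η ᵥ* Xm) := by
      rcases eq_or_ne lam.im 0 with him | him
      · refine ⟨lam.re, ?_, ?_⟩
        · congr 1
          apply Complex.ext <;> simp [him]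
        · have h5 : η ᵥ* Xp = lam.re • (η ᵥ* Xm) := by
            funext t
            have hre := congrArg Complex.re (congrFun hXpXm t)
            simpa [cxv, him] using hre
          rw [hηAXm, h5]
      · have hXm0 : η ᵥ* Xm = 0 := by
          funext t
          have him2 := congrArg Complex.im (congrFun hXpXm t)
          simp [cxv] at him2
          exact him2.resolve_left him
        refine ⟨‖lam‖, ?_, ?_⟩
        · rw [Complex.norm_real, Real.norm_eq_abs, abs_of_nonneg (norm_nonneg lam)]
        · have h6 : cxv (η ᵥ* Xp) = 0 := by
            rw [hXpXm, hXm0]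
            funext t; simp [cxv]
          rw [hηAXm, cxv_eq_zero.mp h6, hXm0, smul_zero]
    set vr : Fin n → ℝ := η ᵥ* A - μr • η with hvr_def
    have hvrXm : vr ᵥ* Xm = 0 := by
      rw [hvr_def, sub_vecMul, Matrix.smul_vecMul, vecMul_vecMul, hμr, sub_self]
    have hηη : η ⬝ᵥ η ≠ 0 := by rw [Ne, dotProduct_self_eq_zero]; exact hη0
    refine ⟨A - vecMulVec ((η ⬝ᵥ η)⁻¹ • η) vr, ((μr : ℝ) : ℂ), cxv η, ?_, habs, ?_, ?_, ?_⟩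
    · rw [Matrix.sub_mul, vecMulVec_mul', hvrXm, vecMulVec_zero_right, sub_zero, ← hA]
    · rw [Ne, cxv_eq_zero]; exact hη0
    · have hcxsub : cx (A - vecMulVec ((η ⬝ᵥ η)⁻¹ • η) vr) =
          cx A - cx (vecMulVec ((η ⬝ᵥ η)⁻¹ • η) vr) := by
        ext i j; simp [cx]
      have hre : (fun i => ((cxv η) i).re) = η := by funext i; simp [cxv]
      have him0 : (fun i => ((cxv η) i).im) = (0 : Fin n → ℝ) := by funext i; simp [cxv]
      rw [hcxsub, vecMul_sub, vecMul_sub, vecMul_smul_mat, vecMul_one, vecMul_cx_vecMulVec,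
        dot_cxv, hre, him0, zero_dotProduct, dotProduct_smul, smul_eq_mul,
        inv_mul_cancel₀ hηη, ← cxv_vecMul]
      funext i
      simp only [Pi.sub_apply, Pi.smul_apply, Pi.zero_apply, smul_eq_mul, cxv, hvr_def,
        Complex.ofReal_one, Complex.ofReal_zero, zero_mul, add_zero, one_mul,
        Complex.ofReal_sub, Complex.ofReal_mul]
      push_cast
      ring
    · rw [← cxv_vecMul, hηB]
      funext i; simp [cxv]
  · -- independent case
    set f : Fin n → ℝ := ((p ⬝ᵥ p) * (q ⬝ᵥ q) - (p ⬝ᵥ q) ^ 2)⁻¹ • ((q ⬝ᵥ q) • p - (p ⬝ᵥ q) • q)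
      with hf_def
    set g : Fin n → ℝ := ((p ⬝ᵥ p) * (q ⬝ᵥ q) - (p ⬝ᵥ q) ^ 2)⁻¹ • ((p ⬝ᵥ p) • q - (p ⬝ᵥ q) • p)
      with hg_def
    have hpf : p ⬝ᵥ f = 1 := by
      simp only [hf_def, dotProduct_smul, dotProduct_sub, smul_eq_mul]
      field_simp
    have hqf : q ⬝ᵥ f = 0 := by
      simp only [hf_def, dotProduct_smul, dotProduct_sub, smul_eq_mul]
      rw [dotProduct_comm q p]
      field_simp
      ring
    have hpg : p ⬝ᵥ g = 0 := by
      simp only [hg_def, dotProduct_smul, dotProduct_sub, smul_eq_mul]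
      field_simp
      ring
    have hqg : q ⬝ᵥ g = 1 := by
      simp only [hg_def, dotProduct_smul, dotProduct_sub, smul_eq_mul]
      rw [dotProduct_comm q p]
      field_simp
    refine ⟨A - (vecMulVec f rv1 + vecMulVec g rv2), lam, ξ, ?_, rfl, hξ0, ?_, h2⟩
    · rw [Matrix.sub_mul, Matrix.add_mul, vecMulVec_mul', vecMulVec_mul', hrv1, hrv2,
        vecMulVec_zero_right, vecMulVec_zero_right, add_zero, sub_zero, ← hA]
    · have hcxsub : cx (A - (vecMulVec f rv1 + vecMulVec g rv2)) =
          cx A - (cx (vecMulVec f rv1) + cx (vecMulVec g rv2)) := by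
        ext i j; simp [cx]
      rw [hcxsub, sub_sub, vecMul_sub, vecMul_add, vecMul_add, vecMul_smul_mat, vecMul_one,
        vecMul_cx_vecMulVec, vecMul_cx_vecMulVec, dot_cxv, dot_cxv, ← hp_def, ← hq_def,
        hpf, hqf, hpg, hqg]
      funext j
      have hvj : v j = (ξ ᵥ* cx A) j - lam * ξ j := by rw [hv_def]; simp
      have hrv : ((rv1 j : ℝ) : ℂ) + ((rv2 j : ℝ) : ℂ) * Complex.I = v j := by
        rw [hrv1_def, hrv2_def]; exact Complex.re_add_im (v j)
      simp only [Pi.sub_apply, Pi.add_apply, Pi.smul_apply, smul_eq_mul, Pi.zero_apply, cxv,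
        Complex.ofReal_one, Complex.ofReal_zero, one_mul, zero_mul, zero_add, add_zero]
      rw [mul_comm Complex.I, hrv, hvj]
      ring

lemma main_aux {n mm T : ℕ} (B : Matrix (Fin n) (Fin mm) ℝ)
    (U : Matrix (Fin mm) (Fin T) ℝ) (Xm Xp : Matrix (Fin n) (Fin T) ℝ)
    (hne : ∃ A : Matrix (Fin n) (Fin n) ℝ, Xp = A * Xm + B * U)
    (P : ℂ → Prop) (hP : ∀ lam lam' : ℂ, ‖lam'‖ = ‖lam‖ → P lam → P lam') :
    (∀ A : Matrix (Fin n) (Fin n) ℝ, Xp = A * Xm + B * U → ∀ lam : ℂ, P lam →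
        (fromCols (cx A - lam • 1) (cx B)).rank = n) ↔
      ∀ lam : ℂ, P lam → (fromCols (cx Xp - lam • cx Xm) (cx B)).rank = n := by
  constructor
  · intro h lam hlam
    rw [rank_eq_iff_forall_vecMul]
    intro ξ hξ
    by_contra hξ0
    obtain ⟨A, hA⟩ := hne
    rw [vecMul_fromCols_eq_zero] at hξ
    obtain ⟨A', lam', ζ, hA', habs, hζ0, hζ1, hζ2⟩ :=
      key_construction A B U Xm Xp hA lam ξ hξ0 hξ.1 hξ.2
    have hr := h A' hA' lam' (hP lam lam' habs hlam)
    rw [rank_eq_iff_forall_vecMul] at hr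
    exact hζ0 (hr ζ ((vecMul_fromCols_eq_zero _ _ ζ).mpr ⟨hζ1, hζ2⟩))
  · intro h A hA lam hlam
    have hfac : fromCols (cx Xp - lam • cx Xm) (cx B) =
        fromCols (cx A - lam • 1) (cx B) * fromBlocks (cx Xm) 0 (cx U) 1 := by
      rw [fromCols_mul_fromBlocks, Matrix.mul_zero, Matrix.mul_one, zero_add, hA, cx_add,
        cx_mul, cx_mul, Matrix.sub_mul, Matrix.smul_mul, Matrix.one_mul, sub_add_eq_add_sub]
    apply le_antisymm
    · simpa using (fromCols (cx A - lam • 1) (cx B)).rank_le_card_height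
    · calc n = (fromCols (cx Xp - lam • cx Xm) (cx B)).rank := (h lam hlam).symm
        _ ≤ (fromCols (cx A - lam • 1) (cx B)).rank := by
            rw [hfac]; exact rank_mul_le_left _ _

/-- noiseless case: informativity for controllability / stabilizability. -/
theorem noiseless_informative_controllability_stabilizability (n m T : ℕ)
    (B : Matrix (Fin n) (Fin m) ℝ)
    (U : Matrix (Fin m) (Fin T) ℝ) (X : Matrix (Fin n) (Fin (T + 1)) ℝ)
    (hne : ∃ A : Matrix (Fin n) (Fin n) ℝ, Xplus X = A * Xminus X + B * U) :
    ((∀ A : Matrix (Fin n) (Fin n) ℝ, Xplus X = A * Xminus X + B * U → ∀ lam : ℂ,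
        (fromCols (cx A - lam • 1) (cx B)).rank = n) ↔
      ∀ lam : ℂ, (fromCols (cx (Xplus X) - lam • cx (Xminus X)) (cx B)).rank = n)
    ∧
    ((∀ A : Matrix (Fin n) (Fin n) ℝ, Xplus X = A * Xminus X + B * U →
        ∀ lam : ℂ, 1 ≤ ‖lam‖ →
        (fromCols (cx A - lam • 1) (cx B)).rank = n) ↔
      ∀ lam : ℂ, 1 ≤ ‖lam‖ →
        (fromCols (cx (Xplus X) - lam • cx (Xminus X)) (cx B)).rank = n) := by
  constructor
  · have h := main_aux B U (Xminus X) (Xplus X) hne (fun _ => True) (fun _ _ _ _ => trivial)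
    constructor
    · intro hall lam
      exact h.mp (fun A hA lam _ => hall A hA lam) lam trivial
    · intro hdata A hA lam
      exact h.mpr (fun lam _ => hdata lam) A hA lam trivial
  · exact main_aux B U (Xminus X) (Xplus X) hne (fun l => 1 ≤ ‖l‖)
      (fun lam lam' habs hl => le_of_le_of_eq hl habs.symm)
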